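/- Let G be a locally compact group with a left Haar measure μ and a length function L. Then the following are equivalent: (i) G has polynomial growth with respect to L, i.e., there exist c > 0 and k ∈ ℕ such that μ({ g ∈ G : L(g) ≤ R }) ≤ c·(1 + R)^k for all R > 0; (ii) there exists d > 0 such that ∫_G (1 + L(g))^{-d} dμ(g) < ∞. -/

import Mathlib

open MeasureTheory

/-- Let `G` be a locally compact group with a left Haar measure `μ` and a
length function `L`. Then `G` has polynomial growth with respect to `L` (there are `c > 0`
and `k ∈ ℕ` with `μ(B_L(R)) ≤ c·(1 + R)^k` for all `R > 0`) iff there exists `d > 0` with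
`∫_G (1 + L(g))^{-d} dμ(g) < ∞`. -/
theorem stmt7
    {G : Type*} [Group G] [TopologicalSpace G] [IsTopologicalGroup G]
    [LocallyCompactSpace G] [MeasurableSpace G] [BorelSpace G]
    (μ : Measure G) [μ.IsHaarMeasure]
    (L : G → ℝ) (hL_meas : Measurable L) (hL_nonneg : ∀ g, 0 ≤ L g)
    (hL_bdd : ∀ Q : Set G, IsCompact Q → BddAbove (L '' Q))
    (hL_one : L 1 = 0) (hL_inv : ∀ g, L g⁻¹ = L g)
    (hL_sub : ∀ g h : G, L (g * h) ≤ L g + L h) :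
    (∃ c > 0, ∃ k : ℕ, ∀ R > 0, μ {g : G | L g ≤ R} ≤ ENNReal.ofReal (c * (1 + R) ^ k))
      ↔
    (∃ d : ℝ, 0 < d ∧ ∫⁻ g, ENNReal.ofReal (1 / (1 + L g) ^ d) ∂μ < ⊤) := by
  constructor
  · rintro ⟨c, hc, k, hck⟩
    refine ⟨((k + 2 : ℕ) : ℝ), by positivity, ?_⟩
    set d : ℝ := ((k + 2 : ℕ) : ℝ) with hd
    set f : G → ENNReal := fun g => ENNReal.ofReal (1 / (1 + L g) ^ d) with hf
    -- annuli
    set S : ℕ → Set G := fun n => L ⁻¹' Set.Ico (n : ℝ) (n + 1) with hS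
    have hSm : ∀ n, MeasurableSet (S n) := fun n => hL_meas measurableSet_Ico
    have hdisj : Pairwise (Function.onFun Disjoint S) := by
      intro m n hmn
      apply Set.disjoint_left.2
      intro g hg hg'
      have h1 : (m : ℝ) ≤ L g := hg.1
      have h2 : L g < (m : ℝ) + 1 := hg.2
      have h3 : (n : ℝ) ≤ L g := hg'.1
      have h4 : L g < (n : ℝ) + 1 := hg'.2
      have hmn1 : (m : ℝ) < (n : ℝ) + 1 := lt_of_le_of_lt h1 h4
      have hmn2 : (n : ℝ) < (m : ℝ) + 1 := lt_of_le_of_lt h3 h2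
      have e1 : m < n + 1 := by exact_mod_cast hmn1
      have e2 : n < m + 1 := by exact_mod_cast hmn2
      exact hmn (by omega)
    have hcover : (⋃ n, S n) = Set.univ := by
      ext g
      simp only [Set.mem_iUnion, Set.mem_univ, iff_true]
      exact ⟨⌊L g⌋₊, Nat.floor_le (hL_nonneg g), Nat.lt_floor_add_one (L g)⟩
    have key : ∫⁻ g, f g ∂μ = ∑' n, ∫⁻ g in S n, f g ∂μ := by
      rw [← lintegral_iUnion hSm hdisj, hcover, Measure.restrict_univ]
    -- per-annulus bound
    have hterm : ∀ n : ℕ, ∫⁻ g in S n, f g ∂μ ≤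
        ENNReal.ofReal (c * 2 ^ k * (1 / (1 + (n : ℝ)) ^ 2)) := by
      intro n
      set x : ℝ := (n : ℝ) with hx
      have hx0 : (0 : ℝ) ≤ x := Nat.cast_nonneg n
      have hxp : (0 : ℝ) < 1 + x := by linarith
      have step1 : ∫⁻ g in S n, f g ∂μ ≤
          ENNReal.ofReal (1 / (1 + x) ^ (k + 2)) * μ (S n) := by
        rw [← setLIntegral_const]
        apply setLIntegral_mono' (hSm n)
        intro g hg
        apply ENNReal.ofReal_le_ofReal
        have h1 : (1 + x) ^ (k + 2) ≤ (1 + L g) ^ d := by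
          rw [hd, ← Real.rpow_natCast (1 + x) (k + 2)]
          exact Real.rpow_le_rpow hxp.le (by linarith [hg.1]) (by positivity)
        apply one_div_le_one_div_of_le (by positivity) h1
      have step2 : μ (S n) ≤ ENNReal.ofReal (c * (1 + (x + 1)) ^ k) := by
        refine le_trans (measure_mono ?_) (hck (x + 1) (by linarith))
        intro g hg
        exact le_of_lt hg.2
      have step3 : (1 / (1 + x) ^ (k + 2)) * (c * (1 + (x + 1)) ^ k) ≤
          c * 2 ^ k * (1 / (1 + x) ^ 2) := by
        have e1 : (1 : ℝ) + (x + 1) = 2 + x := by ring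
        rw [e1, div_mul_eq_mul_div, one_mul, mul_one_div,
          div_le_div_iff₀ (by positivity) (by positivity)]
        have h1 : (2 + x) ^ k ≤ 2 ^ k * (1 + x) ^ k := by
          calc (2 + x) ^ k ≤ (2 * (1 + x)) ^ k := by
                apply pow_le_pow_left₀ (by linarith) (by linarith)
            _ = 2 ^ k * (1 + x) ^ k := mul_pow _ _ _
        calc c * (2 + x) ^ k * (1 + x) ^ 2
            ≤ c * (2 ^ k * (1 + x) ^ k) * (1 + x) ^ 2 :=
              mul_le_mul_of_nonneg_right (mul_le_mul_of_nonneg_left h1 hc.le) (by positivity)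
          _ = c * 2 ^ k * ((1 + x) ^ k * (1 + x) ^ 2) := by ring
          _ = c * 2 ^ k * (1 + x) ^ (k + 2) := by rw [← pow_add]
      calc ∫⁻ g in S n, f g ∂μ
          ≤ ENNReal.ofReal (1 / (1 + x) ^ (k + 2)) * ENNReal.ofReal (c * (1 + (x + 1)) ^ k) :=
            step1.trans (mul_le_mul_right step2 _)
        _ = ENNReal.ofReal ((1 / (1 + x) ^ (k + 2)) * (c * (1 + (x + 1)) ^ k)) :=
            (ENNReal.ofReal_mul (by positivity)).symm
        _ ≤ ENNReal.ofReal (c * 2 ^ k * (1 / (1 + x) ^ 2)) :=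
            ENNReal.ofReal_le_ofReal step3
    -- summability of the bound
    have hsum : Summable (fun n : ℕ => c * 2 ^ k * (1 / (1 + (n : ℝ)) ^ 2)) := by
      apply Summable.mul_left
      have hbase : Summable (fun n : ℕ => 1 / ((n : ℝ)) ^ 2) :=
        Real.summable_one_div_nat_pow.2 (by norm_num)
      have := (summable_nat_add_iff 1).2 hbase
      refine this.congr ?_
      intro n
      push_cast
      ring
    calc ∫⁻ g, f g ∂μ = ∑' n, ∫⁻ g in S n, f g ∂μ := key
      _ ≤ ∑' n : ℕ, ENNReal.ofReal (c * 2 ^ k * (1 / (1 + (n : ℝ)) ^ 2)) :=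
          ENNReal.tsum_le_tsum hterm
      _ = ENNReal.ofReal (∑' n : ℕ, c * 2 ^ k * (1 / (1 + (n : ℝ)) ^ 2)) :=
          (ENNReal.ofReal_tsum_of_nonneg (fun n => by positivity) hsum).symm
      _ < ⊤ := ENNReal.ofReal_lt_top
  · rintro ⟨d, hd, hI⟩
    set I := ∫⁻ g, ENNReal.ofReal (1 / (1 + L g) ^ d) ∂μ with hIdef
    refine ⟨I.toReal + 1, by positivity, ⌈d⌉₊, fun R hR => ?_⟩
    set B : Set G := {g : G | L g ≤ R} with hB
    have hball : MeasurableSet B := hL_meas measurableSet_Iic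
    have hRp : (0 : ℝ) < 1 + R := by linarith
    have hlow : ENNReal.ofReal (1 / (1 + R) ^ d) * μ B ≤ I := by
      calc ENNReal.ofReal (1 / (1 + R) ^ d) * μ B
          = ∫⁻ _ in B, ENNReal.ofReal (1 / (1 + R) ^ d) ∂μ := (setLIntegral_const _ _).symm
        _ ≤ ∫⁻ g in B, ENNReal.ofReal (1 / (1 + L g) ^ d) ∂μ := by
            apply setLIntegral_mono' hball
            intro g hg
            apply ENNReal.ofReal_le_ofReal
            apply one_div_le_one_div_of_le (Real.rpow_pos_of_pos (by linarith [hL_nonneg g]) d)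
            have hgR : L g ≤ R := hg
            exact Real.rpow_le_rpow (by linarith [hL_nonneg g]) (by linarith) hd.le
        _ ≤ I := setLIntegral_le_lintegral _ _
    have hpos : (0 : ℝ) < (1 + R) ^ d := Real.rpow_pos_of_pos hRp d
    have hunit : ENNReal.ofReal ((1 + R) ^ d) * ENNReal.ofReal (1 / (1 + R) ^ d) = 1 := by
      rw [← ENNReal.ofReal_mul hpos.le, mul_one_div, div_self hpos.ne', ENNReal.ofReal_one]
    have hmain : μ B ≤ ENNReal.ofReal ((1 + R) ^ d) * I := by
      calc μ B = 1 * μ B := (one_mul _).symm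
        _ = ENNReal.ofReal ((1 + R) ^ d) * (ENNReal.ofReal (1 / (1 + R) ^ d) * μ B) := by
            rw [← mul_assoc, hunit]
        _ ≤ ENNReal.ofReal ((1 + R) ^ d) * I := mul_le_mul_right hlow _
    refine hmain.trans ?_
    have h1 : I ≤ ENNReal.ofReal (I.toReal + 1) := by
      calc I = ENNReal.ofReal I.toReal := (ENNReal.ofReal_toReal hI.ne).symm
        _ ≤ ENNReal.ofReal (I.toReal + 1) := ENNReal.ofReal_le_ofReal (by linarith)
    have h2 : (1 + R) ^ d ≤ (1 + R) ^ (⌈d⌉₊ : ℕ) := by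
      rw [← Real.rpow_natCast (1 + R) ⌈d⌉₊]
      exact Real.rpow_le_rpow_of_exponent_le (by linarith) (Nat.le_ceil d)
    calc ENNReal.ofReal ((1 + R) ^ d) * I
        ≤ ENNReal.ofReal ((1 + R) ^ (⌈d⌉₊ : ℕ)) * ENNReal.ofReal (I.toReal + 1) :=
          mul_le_mul' (ENNReal.ofReal_le_ofReal h2) h1
      _ = ENNReal.ofReal ((I.toReal + 1) * (1 + R) ^ ⌈d⌉₊) := by
          rw [← ENNReal.ofReal_mul (by positivity), mul_comm]
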